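/- arXiv:2402.18218 — 3 statements merged into one kernel-verified Lean document; each statement's English description precedes it below -/
import Mathlib

section
/- Let 𝔩 be a Lie subalgebra of so(3) ⊕ so(3) that is not commutative. Then 𝔩 is conjugate under an inner automorphism of so(3) ⊕ so(3) to one of: (a) a direct sum 𝔩₁ ⊕ 𝔩₂ with each 𝔩ᵢ ∈ {so(3), 𝔱, 0} where 𝔱 is a fixed maximal torus of so(3); or (b) the diagonal subalgebra {(X, X) : X ∈ so(3)}. -/
open Matrix

attribute [local instance 100] LieRing.ofAssociativeRing

/-- `SO(3)` as a set of `3×3` real matrices. -/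
def SO3set : Set (Matrix (Fin 3) (Fin 3) ℝ) :=
  {A | A * Aᵀ = 1 ∧ A.det = 1}

/-- `so(3)`: antisymmetric `3×3` real matrices. -/
noncomputable def so3 : LieSubalgebra ℝ (Matrix (Fin 3) (Fin 3) ℝ) :=
  skewAdjointMatricesLieSubalgebra (1 : Matrix (Fin 3) (Fin 3) ℝ)

/-- A fixed maximal torus `𝔱` of `so(3)`: the span of the infinitesimal rotation
about the third axis. -/
noncomputable def torus3 : Set (Matrix (Fin 3) (Fin 3) ℝ) :=
  (Submodule.span ℝ {(!![0, -1, 0; 1, 0, 0; 0, 0, 0] : Matrix (Fin 3) (Fin 3) ℝ)} :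
    Submodule ℝ (Matrix (Fin 3) (Fin 3) ℝ))


noncomputable def hat3 : (Fin 3 → ℝ) →ₗ[ℝ] Matrix (Fin 3) (Fin 3) ℝ where
  toFun u := !![0, -u 2, u 1; u 2, 0, -u 0; -u 1, u 0, 0]
  map_add' u v := by ext i j; fin_cases i <;> fin_cases j <;> simp <;> ring
  map_smul' c u := by ext i j; fin_cases i <;> fin_cases j <;> simp <;> ring

lemma hat3_apply (u : Fin 3 → ℝ) :
    hat3 u = !![0, -u 2, u 1; u 2, 0, -u 0; -u 1, u 0, 0] := rfl

lemma hat3_inj : Function.Injective hat3 := by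
  intro u v h
  rw [hat3_apply, hat3_apply] at h
  funext i
  fin_cases i
  · simpa using congrFun (congrFun h 2) 1
  · simpa using congrFun (congrFun h 0) 2
  · simpa using congrFun (congrFun h 1) 0

lemma mem_so3_iff {A : Matrix (Fin 3) (Fin 3) ℝ} :
    A ∈ (skewAdjointMatricesLieSubalgebra (1 : Matrix (Fin 3) (Fin 3) ℝ)) ↔ ∃ u, hat3 u = A := by
  rw [mem_skewAdjointMatricesLieSubalgebra, mem_skewAdjointMatricesSubmodule]
  unfold Matrix.IsSkewAdjoint Matrix.IsAdjointPair
  rw [mul_one, one_mul]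
  constructor
  · intro h
    have h' : ∀ i j : Fin 3, A j i = -A i j := fun i j => by
      have := congrFun (congrFun h i) j
      simpa [Matrix.transpose_apply] using this
    refine ⟨![A 2 1, A 0 2, A 1 0], ?_⟩
    rw [hat3_apply]
    ext i j
    fin_cases i <;> fin_cases j <;>
      simp [Matrix.cons_val_zero, Matrix.cons_val_one] <;>
      first
        | linarith [h' 0 0]
        | linarith [h' 1 1]
        | linarith [h' 2 2]
        | linarith [h' 0 1]
        | linarith [h' 0 2]
        | linarith [h' 1 2]
  · rintro ⟨u, rfl⟩
    rw [hat3_apply]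
    ext i j
    fin_cases i <;> fin_cases j <;> simp <;> ring

lemma hat3_mulVec (u w : Fin 3 → ℝ) : (hat3 u).mulVec w = u ⨯₃ w := by
  funext i
  fin_cases i <;>
    simp [hat3_apply, Matrix.mulVec, dotProduct, cross_apply, Fin.sum_univ_three] <;> ring

lemma hat3_bracket (u v : Fin 3 → ℝ) :
    ⁅hat3 u, hat3 v⁆ = hat3 (u ⨯₃ v) := by
  rw [Ring.lie_def]
  ext i j
  fin_cases i <;> fin_cases j <;>
    simp [hat3_apply, Matrix.mul_apply, Fin.sum_univ_three, cross_apply] <;> ring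

lemma cross_of_line {u v w : Fin 3 → ℝ} (hv : ∃ c : ℝ, v = c • u) (hw : ∃ c : ℝ, w = c • u) :
    v ⨯₃ w = 0 := by
  obtain ⟨c, rfl⟩ := hv
  obtain ⟨d, rfl⟩ := hw
  simp [LinearMap.map_smul, LinearMap.smul_apply, smul_comm]

lemma exists_smul_of_cross_eq_zero {u v : Fin 3 → ℝ} (hu : u ≠ 0) (h : u ⨯₃ v = 0) :
    ∃ c : ℝ, v = c • u := by
  by_contra hc
  push_neg at hc
  have : LinearIndependent ℝ ![u, v] := by
    rw [LinearIndependent.pair_iff' hu]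
    intro a hva
    exact hc a hva.symm
  exact (crossProduct_ne_zero_iff_linearIndependent.mpr this) h

lemma exists_cross_ne_zero {u : Fin 3 → ℝ} (hu : u ≠ 0) : ∃ x, x ⨯₃ u ≠ 0 := by
  by_contra hc
  push_neg at hc
  apply hu
  have h0 := hc ![1,0,0]
  have h1 := hc ![0,1,0]
  funext i
  fin_cases i
  · simpa [cross_apply] using congrFun h1 2
  · have := congrFun h0 2
    simpa [cross_apply] using this
  · simpa [cross_apply] using congrFun h0 1


lemma dot_mulVec_eq {M : Matrix (Fin 3) (Fin 3) ℝ} (hM' : Mᵀ * M = 1) (x y : Fin 3 → ℝ) :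
    (M.mulVec x) ⬝ᵥ (M.mulVec y) = x ⬝ᵥ y := by
  have h : ∀ k l : Fin 3, (Mᵀ * M) k l = (1 : Matrix (Fin 3) (Fin 3) ℝ) k l :=
    fun k l => by rw [hM']
  simp only [Matrix.mul_apply, Matrix.transpose_apply, Fin.sum_univ_three] at h
  simp only [Matrix.mulVec, dotProduct, Fin.sum_univ_three]
  have h00 := h 0 0; have h01 := h 0 1; have h02 := h 0 2
  have h10 := h 1 0; have h11 := h 1 1; have h12 := h 1 2
  have h20 := h 2 0; have h21 := h 2 1; have h22 := h 2 2
  simp [Matrix.one_apply] at h00 h01 h02 h10 h11 h12 h20 h21 h22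
  linear_combination (x 0 * y 0) * h00 + (x 0 * y 1) * h01 + (x 0 * y 2) * h02 +
    (x 1 * y 0) * h10 + (x 1 * y 1) * h11 + (x 1 * y 2) * h12 +
    (x 2 * y 0) * h20 + (x 2 * y 1) * h21 + (x 2 * y 2) * h22

lemma vec_ext_of_dot {p q : Fin 3 → ℝ} (h : ∀ z, p ⬝ᵥ z = q ⬝ᵥ z) : p = q := by
  funext i
  have := h (Pi.single i 1)
  simpa [dotProduct_single] using this

lemma det_rows_mulVec (M : Matrix (Fin 3) (Fin 3) ℝ) (u v w : Fin 3 → ℝ) :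
    Matrix.det ![M.mulVec u, M.mulVec v, M.mulVec w] = M.det * Matrix.det ![u, v, w] := by
  simp only [Matrix.det_fin_three (A := ![M.mulVec u, M.mulVec v, M.mulVec w]),
    Matrix.det_fin_three (A := ![u, v, w]), Matrix.det_fin_three (A := M),
    Matrix.cons_val', Matrix.cons_val_zero, Matrix.cons_val_one,
    Matrix.head_cons, Matrix.head_fin_const, Matrix.cons_val_fin_one, Matrix.empty_val',
    Matrix.cons_val_two, Matrix.tail_cons, Matrix.mulVec, dotProduct,
    Fin.sum_univ_three]
  ring

lemma mulVec_cross {M : Matrix (Fin 3) (Fin 3) ℝ} (hM : M * Mᵀ = 1) (u v : Fin 3 → ℝ) :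
    (M.mulVec u) ⨯₃ (M.mulVec v) = M.det • M.mulVec (u ⨯₃ v) := by
  have hM' : Mᵀ * M = 1 := mul_eq_one_comm.mp hM
  apply vec_ext_of_dot
  intro z
  have hz : z = M.mulVec (Mᵀ.mulVec z) := by
    rw [Matrix.mulVec_mulVec, hM, Matrix.one_mulVec]
  rw [hz]
  set w := Mᵀ.mulVec z with hw
  rw [dotProduct_comm, dotProduct_comm _ (M.mulVec w)]
  rw [triple_product_eq_det, det_rows_mulVec]
  rw [dotProduct_smul, dot_mulVec_eq hM', triple_product_eq_det]
  simp [mul_comm]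

lemma so3'_mulVec_cross {g : Matrix (Fin 3) (Fin 3) ℝ} (hg : g ∈ SO3set) (u v : Fin 3 → ℝ) :
    (g.mulVec u) ⨯₃ (g.mulVec v) = g.mulVec (u ⨯₃ v) := by
  rw [mulVec_cross hg.1, hg.2, one_smul]

lemma matrix_ext_mulVec {M N : Matrix (Fin 3) (Fin 3) ℝ}
    (h : ∀ z, M.mulVec z = N.mulVec z) : M = N := by
  ext i j
  have := congrFun (h (Pi.single j 1)) i
  simpa [Matrix.mulVec_single] using this

lemma transpose_mem_SO3' {g : Matrix (Fin 3) (Fin 3) ℝ} (hg : g ∈ SO3set) : gᵀ ∈ SO3set := by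
  refine ⟨?_, by rw [Matrix.det_transpose]; exact hg.2⟩
  rw [Matrix.transpose_transpose]
  exact mul_eq_one_comm.mp hg.1

lemma conj_hat3 {g : Matrix (Fin 3) (Fin 3) ℝ} (hg : g ∈ SO3set) (u : Fin 3 → ℝ) :
    g * hat3 u * gᵀ = hat3 (g.mulVec u) := by
  apply matrix_ext_mulVec
  intro z
  rw [← Matrix.mulVec_mulVec, ← Matrix.mulVec_mulVec, hat3_mulVec, hat3_mulVec]
  have := so3'_mulVec_cross hg u (gᵀ.mulVec z)
  rw [Matrix.mulVec_mulVec, hg.1, Matrix.one_mulVec] at this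
  exact this.symm

lemma exists_unit_perp {a : Fin 3 → ℝ} (ha : a 0 ^ 2 + a 1 ^ 2 + a 2 ^ 2 = 1) :
    ∃ b : Fin 3 → ℝ, (b 0 ^ 2 + b 1 ^ 2 + b 2 ^ 2 = 1) ∧
      (a 0 * b 0 + a 1 * b 1 + a 2 * b 2 = 0) := by
  by_cases h12 : a 1 = 0 ∧ a 2 = 0
  · exact ⟨![0, 1, 0], by norm_num [Matrix.cons_val_two], by simp [h12.1]⟩
  · have hpos : 0 < a 1 ^ 2 + a 2 ^ 2 := by
      rcases not_and_or.mp h12 with h | h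
      · have h' : 0 < a 1 ^ 2 := by positivity
        nlinarith [sq_nonneg (a 2)]
      · have h' : 0 < a 2 ^ 2 := by positivity
        nlinarith [sq_nonneg (a 1)]
    set s := Real.sqrt (a 1 ^ 2 + a 2 ^ 2) with hs
    have hspos : 0 < s := Real.sqrt_pos.mpr hpos
    have hs2 : s ^ 2 = a 1 ^ 2 + a 2 ^ 2 := Real.sq_sqrt hpos.le
    refine ⟨![0, a 2 / s, -(a 1) / s], ?_, ?_⟩
    · simp only [Matrix.cons_val]
      field_simp
      linarith [hs2]
    · simp only [Matrix.cons_val]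
      field_simp
      ring

lemma rot_to_e3 {a : Fin 3 → ℝ} (ha : a 0 ^ 2 + a 1 ^ 2 + a 2 ^ 2 = 1) :
    ∃ g ∈ SO3set, g.mulVec a = ![0, 0, 1] := by
  obtain ⟨b, hb, hab⟩ := exists_unit_perp ha
  refine ⟨Matrix.of ![b, a ⨯₃ b, a], ⟨?_, ?_⟩, ?_⟩
  · ext i j
    fin_cases i <;> fin_cases j <;>
      simp only [Matrix.mul_apply, Matrix.transpose_apply, Fin.sum_univ_three, Matrix.of_apply,
        Matrix.cons_val', Matrix.cons_val_zero, Matrix.cons_val_one, Matrix.head_cons,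
        Matrix.cons_val_two, Matrix.tail_cons, Matrix.empty_val', Matrix.cons_val_fin_one,
        cross_apply, Matrix.one_apply, Fin.mk_zero, Fin.mk_one] <;>
      norm_num [Fin.ext_iff] <;>
      first
        | linear_combination hb
        | linear_combination ha
        | linear_combination hab
        | linear_combination (b 0 ^ 2 + b 1 ^ 2 + b 2 ^ 2) * ha + hb -
            (a 0 * b 0 + a 1 * b 1 + a 2 * b 2) * hab
        | ring
  · rw [Matrix.det_fin_three]
    simp only [Matrix.of_apply, Matrix.cons_val', Matrix.cons_val_zero, Matrix.cons_val_one,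
      Matrix.head_cons, Matrix.cons_val_two, Matrix.tail_cons, Matrix.empty_val',
      Matrix.cons_val_fin_one, cross_apply, Fin.mk_zero, Fin.mk_one]
    norm_num
    linear_combination (b 0 ^ 2 + b 1 ^ 2 + b 2 ^ 2) * ha + hb -
      (a 0 * b 0 + a 1 * b 1 + a 2 * b 2) * hab
  · funext i
    fin_cases i <;>
      simp only [Matrix.mulVec, dotProduct, Fin.sum_univ_three, Matrix.of_apply,
        Matrix.cons_val', Matrix.cons_val_zero, Matrix.cons_val_one, Matrix.head_cons,
        Matrix.cons_val_two, Matrix.tail_cons, Matrix.empty_val', Matrix.cons_val_fin_one,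
        cross_apply, Fin.mk_zero, Fin.mk_one] <;>
      norm_num <;>
      first
        | linear_combination hab
        | linear_combination ha
        | ring

lemma rot_line {u : Fin 3 → ℝ} (hu : u ≠ 0) :
    ∃ g ∈ SO3set, ∃ c : ℝ, c ≠ 0 ∧ g.mulVec u = c • ![0, 0, 1] := by
  have hpos : 0 < u 0 ^ 2 + u 1 ^ 2 + u 2 ^ 2 := by
    have : u 0 ≠ 0 ∨ u 1 ≠ 0 ∨ u 2 ≠ 0 := by
      by_contra hc
      push_neg at hc
      exact hu (funext fun i => by fin_cases i <;> simp [hc.1, hc.2.1, hc.2.2])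
    rcases this with h | h | h <;>
      [skip; skip; skip] <;>
      [(have h' : 0 < u 0 ^ 2 := by positivity);
       (have h' : 0 < u 1 ^ 2 := by positivity);
       (have h' : 0 < u 2 ^ 2 := by positivity)] <;>
      nlinarith [sq_nonneg (u 0), sq_nonneg (u 1), sq_nonneg (u 2)]
  set n := Real.sqrt (u 0 ^ 2 + u 1 ^ 2 + u 2 ^ 2) with hn
  have hnpos : 0 < n := Real.sqrt_pos.mpr hpos
  have hn2 : n ^ 2 = u 0 ^ 2 + u 1 ^ 2 + u 2 ^ 2 := Real.sq_sqrt hpos.le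
  set a : Fin 3 → ℝ := n⁻¹ • u with haa
  have ha : a 0 ^ 2 + a 1 ^ 2 + a 2 ^ 2 = 1 := by
    simp only [haa, Pi.smul_apply, smul_eq_mul]
    field_simp
    linarith [hn2]
  obtain ⟨g, hg, hga⟩ := rot_to_e3 ha
  refine ⟨g, hg, n, hnpos.ne', ?_⟩
  have : u = n • a := by
    rw [haa, smul_smul, mul_inv_cancel₀ hnpos.ne', one_smul]
  rw [this, Matrix.mulVec_smul, hga]

lemma vecMul_rows (x u v w : Fin 3 → ℝ) :
    Matrix.vecMul x (Matrix.of ![u, v, w]) = x 0 • u + x 1 • v + x 2 • w := by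
  funext j
  simp [Matrix.vecMul, dotProduct, Fin.sum_univ_three]

lemma subspace_cross_classify (S : Submodule ℝ (Fin 3 → ℝ))
    (hS : ∀ u ∈ S, ∀ v ∈ S, u ⨯₃ v ∈ S) :
    S = ⊥ ∨ (∃ u, u ≠ 0 ∧ S = Submodule.span ℝ {u}) ∨ S = ⊤ := by
  by_cases hbot : S = ⊥
  · exact Or.inl hbot
  obtain ⟨u, huS, hu0⟩ := Submodule.ne_bot_iff S |>.mp hbot
  by_cases hline : ∀ x ∈ S, ∃ c : ℝ, x = c • u
  · refine Or.inr (Or.inl ⟨u, hu0, ?_⟩)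
    apply le_antisymm
    · intro x hx
      obtain ⟨c, rfl⟩ := hline x hx
      exact Submodule.smul_mem _ c (Submodule.mem_span_singleton_self u)
    · rw [Submodule.span_singleton_le_iff_mem]; exact huS
  · push_neg at hline
    obtain ⟨v, hvS, hv⟩ := hline
    have hw0 : u ⨯₃ v ≠ 0 := by
      intro h
      obtain ⟨c, hc⟩ := exists_smul_of_cross_eq_zero hu0 h
      exact hv c hc
    set w := u ⨯₃ v with hwdef
    have hwS : w ∈ S := hS u huS v hvS
    set M := Matrix.of ![u, v, w] with hM
    have hdet : M.det = w ⬝ᵥ w := by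
      show Matrix.det ![u, v, w] = w ⬝ᵥ w
      rw [← triple_product_eq_det, triple_product_permutation, triple_product_permutation]
    have hdet0 : IsUnit M.det := by
      rw [hdet]
      exact (dotProduct_self_eq_zero.ne.mpr hw0).isUnit
    refine Or.inr (Or.inr (Submodule.eq_top_iff'.mpr fun e => ?_))
    have he : e = Matrix.vecMul (Matrix.vecMul e M⁻¹) M := by
      rw [Matrix.vecMul_vecMul, Matrix.nonsing_inv_mul M hdet0, Matrix.vecMul_one]
    rw [he, vecMul_rows]
    exact Submodule.add_mem _ (Submodule.add_mem _ (Submodule.smul_mem _ _ huS)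
      (Submodule.smul_mem _ _ hvS)) (Submodule.smul_mem _ _ hwS)

lemma ideal_cross_classify (S : Submodule ℝ (Fin 3 → ℝ))
    (hS : ∀ x : Fin 3 → ℝ, ∀ v ∈ S, x ⨯₃ v ∈ S) (hne : S ≠ ⊥) : S = ⊤ := by
  rcases subspace_cross_classify S (fun a _ b hb => hS a b hb) with h | ⟨x₀, hx0, hspan⟩ | h
  · exact absurd h hne
  · exfalso
    obtain ⟨u, huS, hu0⟩ := Submodule.ne_bot_iff S |>.mp hne
    obtain ⟨x, hx⟩ := exists_cross_ne_zero hu0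
    have hwS : x ⨯₃ u ∈ S := hS x u huS
    rw [hspan] at huS hwS
    obtain ⟨d, hd⟩ := Submodule.mem_span_singleton.mp huS
    obtain ⟨c, hc⟩ := Submodule.mem_span_singleton.mp hwS
    have hdot : (x ⨯₃ u) ⬝ᵥ u = 0 := by
      rw [dotProduct_comm]
      exact dot_cross_self x u
    have hx00 : x₀ ⬝ᵥ x₀ ≠ 0 := dotProduct_self_eq_zero.ne.mpr hx0
    have hd0 : d ≠ 0 := by
      rintro rfl
      rw [zero_smul] at hd
      exact hu0 hd.symm
    rw [← hc, ← hd, smul_dotProduct, dotProduct_smul, smul_eq_mul, smul_eq_mul] at hdot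
    have h2 : (c * d) * (x₀ ⬝ᵥ x₀) = 0 := by linear_combination hdot
    have hc0 : c = 0 := by
      rcases mul_eq_zero.mp h2 with h | h
      · exact (mul_eq_zero.mp h).resolve_right hd0
      · exact absurd h hx00
    rw [hc0, zero_smul] at hc
    exact hx (hc.symm)
  · exact h

lemma cross_cross_eq (a b c : Fin 3 → ℝ) :
    a ⨯₃ (b ⨯₃ c) = (a ⬝ᵥ c) • b - (a ⬝ᵥ b) • c := by
  funext i
  fin_cases i <;> simp [cross_apply, dotProduct, Fin.sum_univ_three] <;> ring

lemma indep_coeffs {y z : Fin 3 → ℝ} (h : z ⨯₃ y ≠ 0) {A B : ℝ}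
    (hAB : A • y + B • z = 0) : A = 0 ∧ B = 0 := by
  have hz0 : z ≠ 0 := by rintro rfl; simp at h
  have h1 : A • (z ⨯₃ y) = 0 := by
    have := congrArg (fun t => z ⨯₃ t) hAB
    simpa [map_add, LinearMap.map_smul, cross_self] using this
  have hA : A = 0 := by
    rcases smul_eq_zero.mp h1 with h' | h'
    · exact h'
    · exact absurd h' h
  refine ⟨hA, ?_⟩
  rw [hA, zero_smul, zero_add] at hAB
  rcases smul_eq_zero.mp hAB with h' | h'
  · exact h'
  · exact absurd h' hz0

lemma cross_aut_is_SO3 (φ : (Fin 3 → ℝ) ≃ₗ[ℝ] (Fin 3 → ℝ))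
    (hφ : ∀ u v, φ (u ⨯₃ v) = (φ u) ⨯₃ (φ v)) :
    ∃ g ∈ SO3set, ∀ u, φ u = g.mulVec u := by
  have horth : ∀ u w, (φ u) ⬝ᵥ (φ w) = u ⬝ᵥ w := by
    intro u w
    by_cases hw : w = 0
    · simp [hw]
    have hφw : φ w ≠ 0 := by
      simp only [ne_eq, LinearEquiv.map_eq_zero_iff]
      exact hw
    obtain ⟨y, hy⟩ := exists_cross_ne_zero hφw
    set v := φ.symm y with hv
    have hyv : φ v = y := φ.apply_symm_apply y
    have key : φ (u ⨯₃ (v ⨯₃ w)) = (φ u) ⨯₃ ((φ v) ⨯₃ (φ w)) := by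
      rw [hφ, hφ]
    rw [cross_cross_eq, cross_cross_eq] at key
    rw [map_sub, _root_.map_smul, _root_.map_smul] at key
    have hcomb : ((u ⬝ᵥ w) - ((φ u) ⬝ᵥ (φ w))) • (φ v) +
        (((φ u) ⬝ᵥ (φ v)) - (u ⬝ᵥ v)) • (φ w) = 0 := by
      have := sub_eq_zero.mpr key
      rw [sub_sub_sub_comm] at this
      rw [sub_smul, sub_smul]
      abel_nf
      abel_nf at this
      linear_combination (norm := module) this
    have hzy : (φ w) ⨯₃ (φ v) ≠ 0 := by
      rw [hyv]
      intro h
      apply hy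
      have h2 := cross_anticomm y (φ w)
      rw [h] at h2
      rw [← neg_eq_zero, h2]
    have := indep_coeffs hzy hcomb
    linarith [this.1]
  set g := LinearMap.toMatrix' (φ : (Fin 3 → ℝ) →ₗ[ℝ] (Fin 3 → ℝ)) with hg
  have hmv : ∀ u, φ u = g.mulVec u := by
    intro u
    rw [hg, ← Matrix.toLin'_apply, Matrix.toLin'_toMatrix']
    rfl
  have hortho : gᵀ * g = 1 := by
    ext i j
    have h1 := horth (Pi.single i 1) (Pi.single j 1)
    rw [hmv, hmv] at h1
    simp only [Matrix.mulVec_single, Matrix.mul_apply, Matrix.transpose_apply,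
      dotProduct, Fin.sum_univ_three, Pi.single_apply, Matrix.one_apply] at h1 ⊢
    clear hmv hg
    fin_cases i <;> fin_cases j <;> simp_all <;> linarith
  have hgo : g * gᵀ = 1 := mul_eq_one_comm.mp hortho
  have hdet : g.det = 1 := by
    have hne : (![1,0,0] : Fin 3 → ℝ) ⨯₃ ![0,1,0] ≠ 0 := by
      intro h
      have := congrFun h 2
      simp [cross_apply] at this
    have h1 : (g.mulVec ![1,0,0]) ⨯₃ (g.mulVec ![0,1,0]) =
        g.det • g.mulVec ((![1,0,0] : Fin 3 → ℝ) ⨯₃ ![0,1,0]) := mulVec_cross hgo _ _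
    rw [← hmv, ← hmv, ← hφ, hmv] at h1
    have hnz : g.mulVec ((![1,0,0] : Fin 3 → ℝ) ⨯₃ ![0,1,0]) ≠ 0 := by
      rw [← hmv]
      simp only [ne_eq, LinearEquiv.map_eq_zero_iff]
      exact hne
    have h3 : (1 - g.det) • g.mulVec ((![1,0,0] : Fin 3 → ℝ) ⨯₃ ![0,1,0]) = 0 := by
      rw [sub_smul, one_smul, sub_eq_zero]
      exact h1
    rcases smul_eq_zero.mp h3 with h' | h'
    · linarith
    · exact absurd h' hnz
  exact ⟨g, ⟨hgo, hdet⟩, hmv⟩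

def lineSet : Set (Fin 3 → ℝ) := ↑(Submodule.span ℝ {(![0,0,1] : Fin 3 → ℝ)})

def vconc (W : Submodule ℝ ((Fin 3 → ℝ) × (Fin 3 → ℝ))) : Prop :=
  ∃ g₁ ∈ SO3set, ∃ g₂ ∈ SO3set,
    (∃ A ∈ ({Set.univ, lineSet, {0}} : Set (Set (Fin 3 → ℝ))),
     ∃ B ∈ ({Set.univ, lineSet, {0}} : Set (Set (Fin 3 → ℝ))),
      (fun p : (Fin 3 → ℝ) × (Fin 3 → ℝ) => (g₁.mulVec p.1, g₂.mulVec p.2)) '' W = A ×ˢ B)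
    ∨ (fun p : (Fin 3 → ℝ) × (Fin 3 → ℝ) => (g₁.mulVec p.1, g₂.mulVec p.2)) '' W
        = {p : (Fin 3 → ℝ) × (Fin 3 → ℝ) | p.2 = p.1}

lemma mulVec_image_span {g : Matrix (Fin 3) (Fin 3) ℝ} {u : Fin 3 → ℝ} {c : ℝ} (hc : c ≠ 0)
    (hgu : g.mulVec u = c • ![0,0,1]) :
    ∀ b, (∃ d : ℝ, b = d • u) → g.mulVec b ∈ lineSet := by
  rintro b ⟨d, rfl⟩
  rw [Matrix.mulVec_smul, hgu, smul_smul]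
  exact Submodule.smul_mem _ _ (Submodule.mem_span_singleton_self _)

lemma goursat_core (W : Submodule ℝ ((Fin 3 → ℝ) × (Fin 3 → ℝ)))
    (hbr : ∀ p ∈ W, ∀ q ∈ W, ((p.1 ⨯₃ q.1, p.2 ⨯₃ q.2) : (Fin 3 → ℝ) × (Fin 3 → ℝ)) ∈ W)
    (hnc : ∃ p ∈ W, ∃ q ∈ W,
      ((p.1 ⨯₃ q.1, p.2 ⨯₃ q.2) : (Fin 3 → ℝ) × (Fin 3 → ℝ)) ≠ 0)
    (hP1 : ∀ x : Fin 3 → ℝ, ∃ b, ((x, b) : (Fin 3 → ℝ) × (Fin 3 → ℝ)) ∈ W) :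
    vconc W := by
  classical
  -- K₁
  set K₁ : Submodule ℝ (Fin 3 → ℝ) := W.comap (LinearMap.inl ℝ _ _) with hK₁def
  have hK₁mem : ∀ a, a ∈ K₁ ↔ ((a, 0) : (Fin 3 → ℝ) × (Fin 3 → ℝ)) ∈ W := fun a => Iff.rfl
  have hK₁ideal : ∀ x : Fin 3 → ℝ, ∀ a ∈ K₁, x ⨯₃ a ∈ K₁ := by
    intro x a ha
    obtain ⟨b, hb⟩ := hP1 x
    have := hbr _ hb _ ((hK₁mem a).mp ha)
    simpa [hK₁mem] using this
  have hK₁cases : K₁ = ⊥ ∨ K₁ = ⊤ := by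
    by_cases h : K₁ = ⊥
    · exact Or.inl h
    · exact Or.inr (ideal_cross_classify K₁ hK₁ideal h)
  -- P₂
  set P₂ : Submodule ℝ (Fin 3 → ℝ) := W.map (LinearMap.snd ℝ _ _) with hP₂def
  have hP₂mem : ∀ b, b ∈ P₂ ↔ ∃ a, ((a, b) : (Fin 3 → ℝ) × (Fin 3 → ℝ)) ∈ W := by
    intro b
    constructor
    · rintro ⟨⟨a, b'⟩, hab, rfl⟩
      exact ⟨a, hab⟩
    · rintro ⟨a, ha⟩
      exact ⟨(a, b), ha, rfl⟩
  have hP₂cross : ∀ u ∈ P₂, ∀ v ∈ P₂, u ⨯₃ v ∈ P₂ := by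
    intro u hu v hv
    obtain ⟨a, ha⟩ := (hP₂mem u).mp hu
    obtain ⟨c, hc⟩ := (hP₂mem v).mp hv
    exact (hP₂mem _).mpr ⟨_, hbr _ ha _ hc⟩
  rcases hK₁cases with hK₁bot | hK₁top
  · -- K₁ = ⊥ : diagonal or contradiction
    have hK₁0 : ∀ a, ((a, 0) : (Fin 3 → ℝ) × (Fin 3 → ℝ)) ∈ W → a = 0 := by
      intro a ha
      have : a ∈ K₁ := (hK₁mem a).mpr ha
      rw [hK₁bot] at this
      simpa using this
    -- P₂ must be ⊤
    have hP₂top : P₂ = ⊤ := by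
      rcases subspace_cross_classify P₂ hP₂cross with h | ⟨u, -, h⟩ | h
      · exfalso
        obtain ⟨p, hp, q, hq, hne⟩ := hnc
        apply hne
        have hp2 : p.2 = 0 := by
          have : p.2 ∈ P₂ := (hP₂mem _).mpr ⟨p.1, by simpa using hp⟩
          rw [h] at this; simpa using this
        have hq2 : q.2 = 0 := by
          have : q.2 ∈ P₂ := (hP₂mem _).mpr ⟨q.1, by simpa using hq⟩
          rw [h] at this; simpa using this
        have hc2 : p.2 ⨯₃ q.2 = 0 := by rw [hp2, hq2]; simp
        have hbrin := hbr p hp q hq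
        rw [hc2] at hbrin
        have h1 : p.1 ⨯₃ q.1 = 0 := hK₁0 _ hbrin
        rw [h1, hc2]
        rfl
      · exfalso
        obtain ⟨p, hp, q, hq, hne⟩ := hnc
        apply hne
        have hp2 : ∃ c : ℝ, p.2 = c • u := by
          have : p.2 ∈ P₂ := (hP₂mem _).mpr ⟨p.1, by simpa using hp⟩
          rw [h] at this
          obtain ⟨c, hc⟩ := Submodule.mem_span_singleton.mp this
          exact ⟨c, hc.symm⟩
        have hq2 : ∃ c : ℝ, q.2 = c • u := by
          have : q.2 ∈ P₂ := (hP₂mem _).mpr ⟨q.1, by simpa using hq⟩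
          rw [h] at this
          obtain ⟨c, hc⟩ := Submodule.mem_span_singleton.mp this
          exact ⟨c, hc.symm⟩
        have hc2 : p.2 ⨯₃ q.2 = 0 := cross_of_line hp2 hq2
        have hbrin := hbr p hp q hq
        rw [hc2] at hbrin
        have h1 : p.1 ⨯₃ q.1 = 0 := hK₁0 _ hbrin
        rw [h1, hc2]
        rfl
      · exact h
    -- K₂
    have hK₂bot : ∀ b, ((0, b) : (Fin 3 → ℝ) × (Fin 3 → ℝ)) ∈ W → b = 0 := by
      intro b hb
      by_contra hb0
      -- K₂ is a nonzero ideal, hence ⊤, contradiction with K₁ = ⊥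
      set K₂ : Submodule ℝ (Fin 3 → ℝ) := W.comap (LinearMap.inr ℝ _ _) with hK₂def
      have hK₂mem : ∀ b, b ∈ K₂ ↔ ((0, b) : (Fin 3 → ℝ) × (Fin 3 → ℝ)) ∈ W := fun _ => Iff.rfl
      have hK₂ideal : ∀ x : Fin 3 → ℝ, ∀ a ∈ K₂, x ⨯₃ a ∈ K₂ := by
        intro x a ha
        have hx : x ∈ P₂ := by rw [hP₂top]; trivial
        obtain ⟨c, hc⟩ := (hP₂mem x).mp hx
        have := hbr _ hc _ ((hK₂mem a).mp ha)
        simpa [hK₂mem] using this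
      have hK₂ne : K₂ ≠ ⊥ := by
        intro hcon
        have : b ∈ K₂ := (hK₂mem b).mpr hb
        rw [hcon] at this
        exact hb0 (by simpa using this)
      have hK₂top := ideal_cross_classify K₂ hK₂ideal hK₂ne
      -- then every x is 0, contradiction
      obtain ⟨b', hb'⟩ := hP1 ![1,0,0]
      have hbK : ((0, b') : (Fin 3 → ℝ) × (Fin 3 → ℝ)) ∈ W := by
        have : b' ∈ K₂ := by rw [hK₂top]; trivial
        exact (hK₂mem b').mp this
      have : ((![1,0,0] - 0, b' - b') : (Fin 3 → ℝ) × (Fin 3 → ℝ)) ∈ W := W.sub_mem hb' hbK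
      simp only [sub_zero, sub_self] at this
      have h10 : (![1,0,0] : Fin 3 → ℝ) = 0 := hK₁0 _ this
      have := congrFun h10 0
      norm_num at this
    -- construct φ
    have hker1 : ∀ p : (Fin 3 → ℝ) × (Fin 3 → ℝ), p ∈ W → p.1 = 0 → p = 0 := by
      intro p hp h1
      have : p.2 = 0 := hK₂bot p.2 (by rw [← h1]; simpa using hp)
      exact Prod.ext h1 this
    let f₁ : W →ₗ[ℝ] (Fin 3 → ℝ) := (LinearMap.fst ℝ _ _).comp W.subtype
    let f₂ : W →ₗ[ℝ] (Fin 3 → ℝ) := (LinearMap.snd ℝ _ _).comp W.subtype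
    have hf₁bij : Function.Bijective f₁ := by
      constructor
      · intro x y hxy
        have : ((x : (Fin 3 → ℝ) × (Fin 3 → ℝ)) - y) ∈ W := W.sub_mem x.2 y.2
        have h0 : ((x : (Fin 3 → ℝ) × (Fin 3 → ℝ)) - y) = 0 := by
          apply hker1 _ this
          show (x : (Fin 3 → ℝ) × (Fin 3 → ℝ)).1 - (y : (Fin 3 → ℝ) × (Fin 3 → ℝ)).1 = 0
          rw [sub_eq_zero]
          exact hxy
        exact Subtype.ext (by rwa [sub_eq_zero] at h0)
      · intro x
        obtain ⟨b, hb⟩ := hP1 x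
        exact ⟨⟨(x, b), hb⟩, rfl⟩
    let e₁ : W ≃ₗ[ℝ] (Fin 3 → ℝ) := LinearEquiv.ofBijective f₁ hf₁bij
    let φ : (Fin 3 → ℝ) →ₗ[ℝ] (Fin 3 → ℝ) := f₂.comp (e₁.symm : (Fin 3 → ℝ) →ₗ[ℝ] W)
    have hφmem : ∀ a, ((a, φ a) : (Fin 3 → ℝ) × (Fin 3 → ℝ)) ∈ W := by
      intro a
      have h1 : ((e₁.symm a : W) : (Fin 3 → ℝ) × (Fin 3 → ℝ)).1 = a := by
        have := e₁.apply_symm_apply a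
        exact this
      have h2 : φ a = ((e₁.symm a : W) : (Fin 3 → ℝ) × (Fin 3 → ℝ)).2 := rfl
      have hval : ((e₁.symm a : W) : (Fin 3 → ℝ) × (Fin 3 → ℝ)) = (a, φ a) :=
        Prod.ext h1 h2.symm
      rw [← hval]
      exact (e₁.symm a : W).2
    have hφchar : ∀ a b, ((a, b) : (Fin 3 → ℝ) × (Fin 3 → ℝ)) ∈ W ↔ b = φ a := by
      intro a b
      constructor
      · intro hab
        have hsub : ((a - a, b - φ a) : (Fin 3 → ℝ) × (Fin 3 → ℝ)) ∈ W :=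
          W.sub_mem hab (hφmem a)
        rw [sub_self] at hsub
        have := hK₂bot _ hsub
        rwa [sub_eq_zero] at this
      · rintro rfl
        exact hφmem a
    have hφcross : ∀ u v, φ (u ⨯₃ v) = (φ u) ⨯₃ (φ v) := by
      intro u v
      have := hbr _ (hφmem u) _ (hφmem v)
      exact ((hφchar _ _).mp this).symm
    have hφinj : Function.Injective φ := by
      intro x y hxy
      have hx := hφmem x
      rw [hxy] at hx
      have : ((x - y, φ y - φ y) : (Fin 3 → ℝ) × (Fin 3 → ℝ)) ∈ W := W.sub_mem hx (hφmem y)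
      rw [sub_self] at this
      have h0 := hK₁0 _ this
      rwa [sub_eq_zero] at h0
    have hφsurj : Function.Surjective φ := by
      intro y
      have hy : y ∈ P₂ := by rw [hP₂top]; trivial
      obtain ⟨a, ha⟩ := (hP₂mem y).mp hy
      exact ⟨a, ((hφchar a y).mp ha).symm⟩
    let φe : (Fin 3 → ℝ) ≃ₗ[ℝ] (Fin 3 → ℝ) := LinearEquiv.ofBijective φ ⟨hφinj, hφsurj⟩
    obtain ⟨g, hg, hgeq⟩ := cross_aut_is_SO3 φe (by intro u v; exact hφcross u v)
    refine ⟨1, ⟨by simp, by simp⟩, gᵀ, transpose_mem_SO3' hg, Or.inr ?_⟩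
    have hgg : gᵀ * g = 1 := mul_eq_one_comm.mp hg.1
    ext x
    constructor
    · rintro ⟨⟨a, b⟩, hab, rfl⟩
      have hb : b = φ a := (hφchar a b).mp hab
      have : gᵀ.mulVec b = a := by
        rw [hb, show φ a = φe a from rfl, hgeq a, Matrix.mulVec_mulVec, hgg, Matrix.one_mulVec]
      simp only [Set.mem_setOf_eq, Matrix.one_mulVec, this]
    · intro hx
      refine ⟨(x.1, φ x.1), hφmem x.1, ?_⟩
      have : gᵀ.mulVec (φ x.1) = x.1 := by
        rw [show φ x.1 = φe x.1 from rfl, hgeq, Matrix.mulVec_mulVec, hgg, Matrix.one_mulVec]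
      simp only [Matrix.one_mulVec, this]
      exact Prod.ext rfl hx.symm
  · -- K₁ = ⊤ : product case
    have hK₁all : ∀ a, ((a, 0) : (Fin 3 → ℝ) × (Fin 3 → ℝ)) ∈ W := by
      intro a
      have : a ∈ K₁ := by rw [hK₁top]; trivial
      exact (hK₁mem a).mp this
    have hWiff : ∀ a b, ((a, b) : (Fin 3 → ℝ) × (Fin 3 → ℝ)) ∈ W ↔ b ∈ P₂ := by
      intro a b
      constructor
      · intro h
        exact (hP₂mem b).mpr ⟨a, h⟩
      · intro h
        obtain ⟨a', ha'⟩ := (hP₂mem b).mp h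
        have : ((a - a', (0 : Fin 3 → ℝ)) : (Fin 3 → ℝ) × (Fin 3 → ℝ)) ∈ W := hK₁all _
        have := W.add_mem this ha'
        simpa [sub_add_cancel] using this
    rcases subspace_cross_classify P₂ hP₂cross with h | ⟨u, hu0, h⟩ | h
    · -- W = univ × {0}
      refine ⟨1, ⟨by simp, by simp⟩, 1, ⟨by simp, by simp⟩,
        Or.inl ⟨Set.univ, by simp, {0}, by simp, ?_⟩⟩
      ext x
      simp only [Set.mem_image, Set.mem_prod, Set.mem_univ, Set.mem_singleton_iff, true_and]
      constructor
      · rintro ⟨⟨a, b⟩, hab, rfl⟩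
        have : b ∈ P₂ := (hWiff a b).mp hab
        rw [h] at this
        simp only [Submodule.mem_bot] at this
        simp [this]
      · intro hx
        refine ⟨(x.1, 0), (hWiff _ _).mpr (by simp), ?_⟩
        simp only [Matrix.one_mulVec]
        exact Prod.ext rfl hx.symm
    · -- W = univ × line
      obtain ⟨g, hgSO, c, hc0, hgu⟩ := rot_line hu0
      refine ⟨1, ⟨by simp, by simp⟩, g, hgSO,
        Or.inl ⟨Set.univ, by simp, lineSet, by simp [lineSet], ?_⟩⟩
      ext x
      simp only [Set.mem_image, Set.mem_prod, Set.mem_univ, true_and]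
      constructor
      · rintro ⟨⟨a, b⟩, hab, rfl⟩
        have hb : b ∈ P₂ := (hWiff a b).mp hab
        rw [h] at hb
        obtain ⟨d, hd⟩ := Submodule.mem_span_singleton.mp hb
        exact mulVec_image_span hc0 hgu b ⟨d, hd.symm⟩
      · intro hx
        obtain ⟨t, ht⟩ := Submodule.mem_span_singleton.mp hx
        refine ⟨(x.1, (t / c) • u), (hWiff _ _).mpr ?_, ?_⟩
        · rw [h]
          exact Submodule.smul_mem _ _ (Submodule.mem_span_singleton_self u)
        · simp only [Matrix.one_mulVec, Matrix.mulVec_smul, hgu, smul_smul]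
          rw [div_mul_cancel₀ _ hc0, ht]
    · -- W = univ × univ
      refine ⟨1, ⟨by simp, by simp⟩, 1, ⟨by simp, by simp⟩,
        Or.inl ⟨Set.univ, by simp, Set.univ, by simp, ?_⟩⟩
      ext x
      simp only [Set.mem_image, Set.mem_prod, Set.mem_univ, and_self, iff_true]
      refine ⟨(x.1, x.2), (hWiff _ _).mpr (by rw [h]; trivial), ?_⟩
      simp only [Matrix.one_mulVec]

lemma goursat_main (W : Submodule ℝ ((Fin 3 → ℝ) × (Fin 3 → ℝ)))
    (hbr : ∀ p ∈ W, ∀ q ∈ W, ((p.1 ⨯₃ q.1, p.2 ⨯₃ q.2) : (Fin 3 → ℝ) × (Fin 3 → ℝ)) ∈ W)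
    (hnc : ∃ p ∈ W, ∃ q ∈ W,
      ((p.1 ⨯₃ q.1, p.2 ⨯₃ q.2) : (Fin 3 → ℝ) × (Fin 3 → ℝ)) ≠ 0) :
    vconc W := by
  classical
  set P₁ : Submodule ℝ (Fin 3 → ℝ) := W.map (LinearMap.fst ℝ _ _) with hP₁def
  set P₂ : Submodule ℝ (Fin 3 → ℝ) := W.map (LinearMap.snd ℝ _ _) with hP₂def
  have hP₁mem : ∀ a, a ∈ P₁ ↔ ∃ b, ((a, b) : (Fin 3 → ℝ) × (Fin 3 → ℝ)) ∈ W := by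
    intro a
    constructor
    · rintro ⟨⟨a', b⟩, hab, rfl⟩
      exact ⟨b, hab⟩
    · rintro ⟨b, hb⟩
      exact ⟨(a, b), hb, rfl⟩
  have hP₂mem : ∀ b, b ∈ P₂ ↔ ∃ a, ((a, b) : (Fin 3 → ℝ) × (Fin 3 → ℝ)) ∈ W := by
    intro b
    constructor
    · rintro ⟨⟨a, b'⟩, hab, rfl⟩
      exact ⟨a, hab⟩
    · rintro ⟨a, ha⟩
      exact ⟨(a, b), ha, rfl⟩
  have hP₁cross : ∀ u ∈ P₁, ∀ v ∈ P₁, u ⨯₃ v ∈ P₁ := by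
    intro u hu v hv
    obtain ⟨b, hb⟩ := (hP₁mem u).mp hu
    obtain ⟨d, hd⟩ := (hP₁mem v).mp hv
    exact (hP₁mem _).mpr ⟨_, hbr _ hb _ hd⟩
  have hP₂cross : ∀ u ∈ P₂, ∀ v ∈ P₂, u ⨯₃ v ∈ P₂ := by
    intro u hu v hv
    obtain ⟨a, ha⟩ := (hP₂mem u).mp hu
    obtain ⟨c, hc⟩ := (hP₂mem v).mp hv
    exact (hP₂mem _).mpr ⟨_, hbr _ ha _ hc⟩
  have htop : P₁ = ⊤ ∨ P₂ = ⊤ := by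
    by_contra hcon
    push_neg at hcon
    obtain ⟨h1, h2⟩ := hcon
    obtain ⟨p, hp, q, hq, hne⟩ := hnc
    apply hne
    have hcross0 : ∀ (P : Submodule ℝ (Fin 3 → ℝ)),
        (∀ u ∈ P, ∀ v ∈ P, u ⨯₃ v ∈ P) → P ≠ ⊤ →
        ∀ x ∈ P, ∀ y ∈ P, x ⨯₃ y = 0 := by
      intro P hPc hPt x hx y hy
      rcases subspace_cross_classify P hPc with hb | ⟨u, -, hs⟩ | ht
      · rw [hb] at hx hy
        simp only [Submodule.mem_bot] at hx hy
        rw [hx, hy]; simp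
      · rw [hs] at hx hy
        obtain ⟨c, hc⟩ := Submodule.mem_span_singleton.mp hx
        obtain ⟨d, hd⟩ := Submodule.mem_span_singleton.mp hy
        exact cross_of_line ⟨c, hc.symm⟩ ⟨d, hd.symm⟩
      · exact absurd ht hPt
    have e1 : p.1 ⨯₃ q.1 = 0 :=
      hcross0 P₁ hP₁cross h1 p.1 ((hP₁mem _).mpr ⟨p.2, by simpa using hp⟩)
        q.1 ((hP₁mem _).mpr ⟨q.2, by simpa using hq⟩)
    have e2 : p.2 ⨯₃ q.2 = 0 :=
      hcross0 P₂ hP₂cross h2 p.2 ((hP₂mem _).mpr ⟨p.1, by simpa using hp⟩)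
        q.2 ((hP₂mem _).mpr ⟨q.1, by simpa using hq⟩)
    rw [e1, e2]
    rfl
  rcases htop with htop | htop
  · apply goursat_core W hbr hnc
    intro x
    have : x ∈ P₁ := by rw [htop]; trivial
    exact (hP₁mem x).mp this
  · -- swap
    set σ : ((Fin 3 → ℝ) × (Fin 3 → ℝ)) ≃ₗ[ℝ] ((Fin 3 → ℝ) × (Fin 3 → ℝ)) :=
      LinearEquiv.prodComm ℝ (Fin 3 → ℝ) (Fin 3 → ℝ) with hσ
    set W' : Submodule ℝ ((Fin 3 → ℝ) × (Fin 3 → ℝ)) := W.map (σ : _ →ₗ[ℝ] _) with hW'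
    have hW'mem : ∀ a b, ((a, b) : (Fin 3 → ℝ) × (Fin 3 → ℝ)) ∈ W' ↔
        ((b, a) : (Fin 3 → ℝ) × (Fin 3 → ℝ)) ∈ W := by
      intro a b
      constructor
      · rintro ⟨⟨c, d⟩, hcd, heq⟩
        have h1 : d = a := congrArg Prod.fst heq
        have h2 : c = b := congrArg Prod.snd heq
        rw [← h1, ← h2]
        exact hcd
      · intro h
        exact ⟨(b, a), h, rfl⟩
    have hbr' : ∀ p ∈ W', ∀ q ∈ W',
        ((p.1 ⨯₃ q.1, p.2 ⨯₃ q.2) : (Fin 3 → ℝ) × (Fin 3 → ℝ)) ∈ W' := by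
      rintro ⟨p1, p2⟩ hp ⟨q1, q2⟩ hq
      rw [hW'mem] at hp hq ⊢
      exact hbr _ hp _ hq
    have hnc' : ∃ p ∈ W', ∃ q ∈ W',
        ((p.1 ⨯₃ q.1, p.2 ⨯₃ q.2) : (Fin 3 → ℝ) × (Fin 3 → ℝ)) ≠ 0 := by
      obtain ⟨p, hp, q, hq, hne⟩ := hnc
      refine ⟨(p.2, p.1), (hW'mem _ _).mpr (by simpa using hp),
        (q.2, q.1), (hW'mem _ _).mpr (by simpa using hq), ?_⟩
      intro h
      apply hne
      have h1 : p.2 ⨯₃ q.2 = 0 := congrArg Prod.fst h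
      have h2 : p.1 ⨯₃ q.1 = 0 := congrArg Prod.snd h
      rw [h1, h2]
      rfl
    have hP1' : ∀ x : Fin 3 → ℝ, ∃ b, ((x, b) : (Fin 3 → ℝ) × (Fin 3 → ℝ)) ∈ W' := by
      intro x
      have : x ∈ P₂ := by rw [htop]; trivial
      obtain ⟨a, ha⟩ := (hP₂mem x).mp this
      exact ⟨a, (hW'mem _ _).mpr ha⟩
    obtain ⟨g₁, hg₁, g₂, hg₂, hconc⟩ := goursat_core W' hbr' hnc' hP1'
    have himg : ∀ x : (Fin 3 → ℝ) × (Fin 3 → ℝ),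
        (x ∈ (fun p : (Fin 3 → ℝ) × (Fin 3 → ℝ) => (g₂.mulVec p.1, g₁.mulVec p.2)) '' W ↔
         (x.2, x.1) ∈ (fun p : (Fin 3 → ℝ) × (Fin 3 → ℝ) => (g₁.mulVec p.1, g₂.mulVec p.2)) '' W') := by
      intro x
      constructor
      · rintro ⟨⟨a, b⟩, hab, rfl⟩
        exact ⟨(b, a), (hW'mem _ _).mpr hab, rfl⟩
      · rintro ⟨⟨b, a⟩, hba, heq⟩
        have hab : ((a, b) : (Fin 3 → ℝ) × (Fin 3 → ℝ)) ∈ W := (hW'mem _ _).mp hba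
        refine ⟨(a, b), hab, ?_⟩
        have h1 : g₁.mulVec b = x.2 := congrArg Prod.fst heq
        have h2 : g₂.mulVec a = x.1 := congrArg Prod.snd heq
        show (g₂.mulVec a, g₁.mulVec b) = x
        rw [h2, h1]
    refine ⟨g₂, hg₂, g₁, hg₁, ?_⟩
    rcases hconc with ⟨A, hA, B, hB, heq⟩ | heq
    · refine Or.inl ⟨B, hB, A, hA, ?_⟩
      ext x
      rw [himg x, heq]
      simp only [Set.mem_prod]
      exact and_comm
    · refine Or.inr ?_
      ext x
      rw [himg x, heq]
      simp only [Set.mem_setOf_eq]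
      exact eq_comm


lemma hat3_e3 : hat3 ![0,0,1] = !![0, -1, 0; 1, 0, 0; 0, 0, 0] := by
  rw [hat3_apply]
  norm_num [Matrix.cons_val_two]

lemma hat3_image_line : hat3 '' lineSet = torus3 := by
  show hat3 '' ↑(Submodule.span ℝ {(![0,0,1] : Fin 3 → ℝ)}) = _
  rw [← Submodule.map_coe hat3, Submodule.map_span, Set.image_singleton, hat3_e3]
  rfl

lemma hat3_image_univ : hat3 '' Set.univ = (so3 : Set (Matrix (Fin 3) (Fin 3) ℝ)) := by
  ext M
  constructor
  · rintro ⟨u, -, rfl⟩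
    exact mem_so3_iff.mpr ⟨u, rfl⟩
  · intro hM
    obtain ⟨u, hu⟩ := mem_so3_iff.mp hM
    exact ⟨u, trivial, hu⟩

lemma hat3_image_zero : hat3 '' ({0} : Set (Fin 3 → ℝ)) = ({0} : Set (Matrix (Fin 3) (Fin 3) ℝ)) := by
  rw [Set.image_singleton, map_zero]

/-- Any noncommutative Lie subalgebra `𝔩 ⊆ so(3) ⊕ so(3)` is conjugate, under an
inner automorphism (componentwise conjugation by `SO(3) × SO(3)`), to a product
`𝔩₁ ⊕ 𝔩₂` with each `𝔩ᵢ ∈ {so(3), 𝔱, 0}`, or to the diagonal `{(X,X)}`. -/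
theorem stmt3
    (L : LieSubalgebra ℝ (Matrix (Fin 3) (Fin 3) ℝ × Matrix (Fin 3) (Fin 3) ℝ))
    (hL : ∀ p ∈ L, p.1 ∈ so3 ∧ p.2 ∈ so3)
    (hnc : ¬ ∀ p ∈ L, ∀ q ∈ L, ⁅p, q⁆ = (0 : Matrix (Fin 3) (Fin 3) ℝ × Matrix (Fin 3) (Fin 3) ℝ)) :
    ∃ g₁ ∈ SO3set, ∃ g₂ ∈ SO3set,
      (∃ S₁ ∈ ({(so3 : Set (Matrix (Fin 3) (Fin 3) ℝ)), torus3, {0}} :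
          Set (Set (Matrix (Fin 3) (Fin 3) ℝ))),
       ∃ S₂ ∈ ({(so3 : Set (Matrix (Fin 3) (Fin 3) ℝ)), torus3, {0}} :
          Set (Set (Matrix (Fin 3) (Fin 3) ℝ))),
        (fun p : Matrix (Fin 3) (Fin 3) ℝ × Matrix (Fin 3) (Fin 3) ℝ =>
            (g₁ * p.1 * g₁ᵀ, g₂ * p.2 * g₂ᵀ)) '' (L : Set _) = S₁ ×ˢ S₂) ∨
      (fun p : Matrix (Fin 3) (Fin 3) ℝ × Matrix (Fin 3) (Fin 3) ℝ =>
          (g₁ * p.1 * g₁ᵀ, g₂ * p.2 * g₂ᵀ)) '' (L : Set _) =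
        {p : Matrix (Fin 3) (Fin 3) ℝ × Matrix (Fin 3) (Fin 3) ℝ |
          p.1 ∈ so3 ∧ p.2 = p.1} := by
  classical
  set W : Submodule ℝ ((Fin 3 → ℝ) × (Fin 3 → ℝ)) :=
    Submodule.comap (LinearMap.prodMap hat3 hat3) L.toSubmodule with hWdef
  have hWmem : ∀ a b, ((a, b) : (Fin 3 → ℝ) × (Fin 3 → ℝ)) ∈ W ↔
      ((hat3 a, hat3 b) : Matrix (Fin 3) (Fin 3) ℝ × Matrix (Fin 3) (Fin 3) ℝ) ∈ L :=
    fun a b => Iff.rfl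
  have hbrL : ∀ (A B C D : Matrix (Fin 3) (Fin 3) ℝ),
      ⁅((A, B) : Matrix (Fin 3) (Fin 3) ℝ × Matrix (Fin 3) (Fin 3) ℝ), ((C, D) : _ × _)⁆
        = ((⁅A, C⁆, ⁅B, D⁆) : _ × _) := fun _ _ _ _ => rfl
  have hbr : ∀ p ∈ W, ∀ q ∈ W,
      ((p.1 ⨯₃ q.1, p.2 ⨯₃ q.2) : (Fin 3 → ℝ) × (Fin 3 → ℝ)) ∈ W := by
    rintro ⟨a, b⟩ hp ⟨c, d⟩ hq
    rw [hWmem] at hp hq ⊢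
    have := L.lie_mem hp hq
    rw [hbrL, hat3_bracket, hat3_bracket] at this
    exact this
  have hsurjL : (L : Set (Matrix (Fin 3) (Fin 3) ℝ × Matrix (Fin 3) (Fin 3) ℝ)) =
      (fun ab : (Fin 3 → ℝ) × (Fin 3 → ℝ) => (hat3 ab.1, hat3 ab.2)) '' (W : Set _) := by
    ext P
    constructor
    · intro hP
      obtain ⟨a, ha⟩ := mem_so3_iff.mp (hL P hP).1
      obtain ⟨b, hb⟩ := mem_so3_iff.mp (hL P hP).2
      refine ⟨(a, b), ?_, ?_⟩
      · rw [SetLike.mem_coe, hWmem, ha, hb]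
        exact hP
      · exact Prod.ext ha hb
    · rintro ⟨⟨a, b⟩, hab, rfl⟩
      exact (hWmem a b).mp hab
  have hncW : ∃ p ∈ W, ∃ q ∈ W,
      ((p.1 ⨯₃ q.1, p.2 ⨯₃ q.2) : (Fin 3 → ℝ) × (Fin 3 → ℝ)) ≠ 0 := by
    push_neg at hnc
    obtain ⟨P, hP, Q, hQ, hPQ⟩ := hnc
    obtain ⟨a, ha⟩ := mem_so3_iff.mp (hL P hP).1
    obtain ⟨b, hb⟩ := mem_so3_iff.mp (hL P hP).2
    obtain ⟨c, hc⟩ := mem_so3_iff.mp (hL Q hQ).1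
    obtain ⟨d, hd⟩ := mem_so3_iff.mp (hL Q hQ).2
    have hPab : P = (hat3 a, hat3 b) := (Prod.ext ha hb).symm
    have hQcd : Q = (hat3 c, hat3 d) := (Prod.ext hc hd).symm
    refine ⟨(a, b), (hWmem a b).mpr (hPab ▸ hP), (c, d), (hWmem c d).mpr (hQcd ▸ hQ), ?_⟩
    intro h0
    apply hPQ
    have h1 : a ⨯₃ c = 0 := congrArg Prod.fst h0
    have h2 : b ⨯₃ d = 0 := congrArg Prod.snd h0
    rw [hPab, hQcd, hbrL, hat3_bracket, hat3_bracket, h1, h2, map_zero]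
    rfl
  obtain ⟨g₁, hg₁, g₂, hg₂, hconc⟩ := goursat_main W hbr hncW
  refine ⟨g₁, hg₁, g₂, hg₂, ?_⟩
  have himg : (fun p : Matrix (Fin 3) (Fin 3) ℝ × Matrix (Fin 3) (Fin 3) ℝ =>
        (g₁ * p.1 * g₁ᵀ, g₂ * p.2 * g₂ᵀ)) '' (L : Set _) =
      (fun ab : (Fin 3 → ℝ) × (Fin 3 → ℝ) => (hat3 ab.1, hat3 ab.2)) ''
        ((fun p : (Fin 3 → ℝ) × (Fin 3 → ℝ) => (g₁.mulVec p.1, g₂.mulVec p.2)) '' (W : Set _)) := by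
    rw [hsurjL, ← Set.image_comp, ← Set.image_comp]
    apply Set.image_congr
    intro ab _
    simp only [Function.comp_apply]
    rw [conj_hat3 hg₁, conj_hat3 hg₂]
  have htrans : ∀ A ∈ ({Set.univ, lineSet, {0}} : Set (Set (Fin 3 → ℝ))),
      hat3 '' A ∈ ({(so3 : Set (Matrix (Fin 3) (Fin 3) ℝ)), torus3, {0}} :
        Set (Set (Matrix (Fin 3) (Fin 3) ℝ))) := by
    intro A hA
    rcases hA with rfl | hA
    · rw [hat3_image_univ]; left; rfl
    rcases hA with rfl | hA
    · rw [hat3_image_line]; right; left; rfl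
    rw [Set.mem_singleton_iff] at hA
    subst hA
    rw [hat3_image_zero]; right; right; rfl
  rcases hconc with ⟨A, hA, B, hB, heq⟩ | heq
  · refine Or.inl ⟨hat3 '' A, htrans A hA, hat3 '' B, htrans B hB, ?_⟩
    rw [himg, heq]
    ext P
    constructor
    · rintro ⟨⟨a, b⟩, ⟨ha, hb⟩, rfl⟩
      exact ⟨⟨a, ha, rfl⟩, ⟨b, hb, rfl⟩⟩
    · rintro ⟨⟨a, ha, h1⟩, ⟨b, hb, h2⟩⟩
      exact ⟨(a, b), ⟨ha, hb⟩, Prod.ext h1 h2⟩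
  · refine Or.inr ?_
    rw [himg, heq]
    ext P
    constructor
    · rintro ⟨⟨a, b⟩, hab, rfl⟩
      have hba : b = a := hab
      subst hba
      exact ⟨mem_so3_iff.mpr ⟨b, rfl⟩, rfl⟩
    · rintro ⟨h1, h2⟩
      obtain ⟨a, ha⟩ := mem_so3_iff.mp h1
      exact ⟨(a, a), rfl, Prod.ext ha (by show hat3 a = P.2; rw [ha, h2])⟩
end

section
/- Let W = S₂ ⋉ (ℤ/2)² act on ℝ² by permuting coordinates and changing signs of coordinates independently. Define ρ_G = (3/2, 1/2), ρ_H = (0, 1/2), ρ_{H'} = (1/2, 1/2), and for X ∈ ℝ² set ‖X‖_G = max_{w ∈ W} ⟨ρ_G, w·X⟩, and similarly ‖X‖_H, ‖X‖_{H'} using the maximum over the order-2 groups {1, s} where s negates the second coordinate (for H) resp. swaps-and-negates appropriately so that ‖X‖_{H'} = max(±(X₁+X₂)/2). Then: (i) for every nonzero X ∈ ℝ², max_{w ∈ W} ‖w·X‖_H < (1/2)‖X‖_G; (ii) for every X ∈ ℝ², max_{w ∈ W} ‖w·X‖_{H'} ≤ (1/2)‖X‖_G, with strict inequality whenever |X₁|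 ≠ |X₂|. -/
/-- The orbit of `X ∈ ℝ²` under the signed permutation group `W = S₂ ⋉ (ℤ/2)²`
(permuting the two coordinates and flipping their signs independently). -/
noncomputable def Worbit (X : ℝ × ℝ) : Finset (ℝ × ℝ) :=
  {(X.1, X.2), (X.1, -X.2), (-X.1, X.2), (-X.1, -X.2),
   (X.2, X.1), (X.2, -X.1), (-X.2, X.1), (-X.2, -X.1)}

/-- `‖X‖_G = max_{w ∈ W} ⟨ρ_G, w·X⟩` with `ρ_G = (3/2, 1/2)`. -/
noncomputable def normG (X : ℝ × ℝ) : ℝ :=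
  (Worbit X).sup' (Finset.insert_nonempty _ _) (fun Y => 3/2 * Y.1 + 1/2 * Y.2)

/-- `‖X‖_H = max over {1,s} of ⟨ρ_H, ·⟩` with `ρ_H = (0, 1/2)`, `s` negating the
second coordinate; concretely `‖X‖_H = |X₂|/2`. -/
noncomputable def normH (X : ℝ × ℝ) : ℝ := |X.2| / 2

/-- `‖X‖_{H'} = max(±(X₁+X₂)/2) = |X₁+X₂|/2`, coming from `ρ_{H'} = (1/2, 1/2)`. -/
noncomputable def normH' (X : ℝ × ℝ) : ℝ := |X.1 + X.2| / 2

/-- `max_{w ∈ W} f(w·X)`. -/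
noncomputable def maxW (f : ℝ × ℝ → ℝ) (X : ℝ × ℝ) : ℝ :=
  (Worbit X).sup' (Finset.insert_nonempty _ _) f

lemma normG_lb (X : ℝ × ℝ) {Y : ℝ × ℝ} (h : Y ∈ Worbit X) :
    3/2 * Y.1 + 1/2 * Y.2 ≤ normG X := by
  unfold normG
  exact Finset.le_sup' (fun Y : ℝ × ℝ => 3/2 * Y.1 + 1/2 * Y.2) h

lemma mem_Worbit (X : ℝ × ℝ) :
    (X.1, X.2) ∈ Worbit X ∧ (X.1, -X.2) ∈ Worbit X ∧ (-X.1, X.2) ∈ Worbit X ∧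
    (-X.1, -X.2) ∈ Worbit X ∧ (X.2, X.1) ∈ Worbit X ∧ (X.2, -X.1) ∈ Worbit X ∧
    (-X.2, X.1) ∈ Worbit X ∧ (-X.2, -X.1) ∈ Worbit X := by
  refine ⟨?_, ?_, ?_, ?_, ?_, ?_, ?_, ?_⟩ <;> simp [Worbit]

/-- Two clean lower bounds on `normG`. -/
lemma normG_ge (X : ℝ × ℝ) :
    (3 * |X.1| + |X.2|) / 2 ≤ normG X ∧ (3 * |X.2| + |X.1|) / 2 ≤ normG X := by
  obtain ⟨m1, m2, m3, m4, m5, m6, m7, m8⟩ := mem_Worbit X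
  have b1 := normG_lb X m1; have b2 := normG_lb X m2
  have b3 := normG_lb X m3; have b4 := normG_lb X m4
  have b5 := normG_lb X m5; have b6 := normG_lb X m6
  have b7 := normG_lb X m7; have b8 := normG_lb X m8
  simp only at b1 b2 b3 b4 b5 b6 b7 b8
  constructor <;>
    rcases abs_cases X.1 with ⟨e1, f1⟩|⟨e1, f1⟩ <;>
    rcases abs_cases X.2 with ⟨e2, f2⟩|⟨e2, f2⟩ <;> linarith

/-- (i) For every nonzero `X ∈ ℝ²`, `max_{w∈W} ‖w·X‖_H < (1/2)‖X‖_G`;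
(ii) for every `X`, `max_{w∈W} ‖w·X‖_{H'} ≤ (1/2)‖X‖_G`, with strict
inequality whenever `|X₁| ≠ |X₂|`. -/
theorem stmt5 :
    (∀ X : ℝ × ℝ, X ≠ 0 → maxW normH X < (1/2) * normG X) ∧
    (∀ X : ℝ × ℝ, maxW normH' X ≤ (1/2) * normG X) ∧
    (∀ X : ℝ × ℝ, |X.1| ≠ |X.2| → maxW normH' X < (1/2) * normG X) := by
  refine ⟨?_, ?_, ?_⟩
  · intro X hX
    obtain ⟨hG1, hG2⟩ := normG_ge X
    have hp : 0 < |X.1| + |X.2| := by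
      rcases eq_or_ne X.1 0 with h1|h1
      · have h2 : X.2 ≠ 0 := fun h2 => hX (Prod.ext h1 h2)
        have := abs_pos.mpr h2
        linarith [abs_nonneg X.1]
      · have := abs_pos.mpr h1
        linarith [abs_nonneg X.2]
    rw [maxW]; refine (Finset.sup'_lt_iff (H := _)).2 ?_
    intro Y hY
    simp only [Worbit, Finset.mem_insert, Finset.mem_singleton] at hY
    rcases hY with rfl|rfl|rfl|rfl|rfl|rfl|rfl|rfl <;>
      simp only [normH] <;> (try rw [abs_neg]) <;> linarith
  · intro X
    obtain ⟨hG1, hG2⟩ := normG_ge X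
    have t1 := abs_add_le X.1 X.2
    have t2 := abs_sub X.1 X.2
    rw [maxW]; refine (Finset.sup'_le_iff (H := _) (f := _)).2 ?_
    intro Y hY
    simp only [Worbit, Finset.mem_insert, Finset.mem_singleton] at hY
    rcases hY with rfl|rfl|rfl|rfl|rfl|rfl|rfl|rfl <;>
      simp only [normH'] <;>
      first
      | (rw [show X.1 + -X.2 = X.1 - X.2 by ring]; linarith)
      | (rw [show -X.1 + X.2 = -(X.1 - X.2) by ring, abs_neg]; linarith)
      | (rw [show -X.1 + -X.2 = -(X.1 + X.2) by ring, abs_neg]; linarith)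
      | (rw [show X.2 + X.1 = X.1 + X.2 by ring]; linarith)
      | (rw [show X.2 + -X.1 = -(X.1 - X.2) by ring, abs_neg]; linarith)
      | (rw [show -X.2 + X.1 = X.1 - X.2 by ring]; linarith)
      | (rw [show -X.2 + -X.1 = -(X.1 + X.2) by ring, abs_neg]; linarith)
      | linarith
  · intro X hne
    obtain ⟨hG1, hG2⟩ := normG_ge X
    have t1 := abs_add_le X.1 X.2
    have t2 := abs_sub X.1 X.2
    have hne' : |X.1| < |X.2| ∨ |X.2| < |X.1| := lt_or_gt_of_ne hne
    rw [maxW]; refine (Finset.sup'_lt_iff (H := _)).2 ?_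
    intro Y hY
    simp only [Worbit, Finset.mem_insert, Finset.mem_singleton] at hY
    rcases hY with rfl|rfl|rfl|rfl|rfl|rfl|rfl|rfl <;>
      simp only [normH'] <;>
      rcases hne' with h0|h0 <;>
      first
      | (rw [show X.1 + -X.2 = X.1 - X.2 by ring]; linarith)
      | (rw [show -X.1 + X.2 = -(X.1 - X.2) by ring, abs_neg]; linarith)
      | (rw [show -X.1 + -X.2 = -(X.1 + X.2) by ring, abs_neg]; linarith)
      | (rw [show X.2 + X.1 = X.1 + X.2 by ring]; linarith)
      | (rw [show X.2 + -X.1 = -(X.1 - X.2) by ring, abs_neg]; linarith)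
      | (rw [show -X.2 + X.1 = X.1 - X.2 by ring]; linarith)
      | (rw [show -X.2 + -X.1 = -(X.1 + X.2) by ring, abs_neg]; linarith)
      | linarith
end

section
/- Let G = SO(1,n) realized as preserving the form with matrix diag(J, I_{n-1}), J = [[0,1],[1,0]], and let 𝔫 be the abelian nilpotent subalgebra of elements X(R) with first block row [0, R; 0...] as in the paper's conventions (R ∈ ℝ^{n-1}). For g ∈ G, define linear maps R_g, S_g : 𝔫 → ℝ^{n-1} sending X to the last n−1 entries of the first row, respectively second row, of g X g⁻¹. Then for every g ∈ G, at least one of R_g, S_g is an invertible linear map. -/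
open Matrix

/-- The matrix `S = diag(J, I_{n-1})` of the form `2x₀x₁ + x₂² + ⋯ + x_n²`. -/
noncomputable def SmatN (n : ℕ) : Matrix (Fin (n+1)) (Fin (n+1)) ℝ :=
  Matrix.of fun i k =>
    if (i.val = 0 ∧ k.val = 1) ∨ (i.val = 1 ∧ k.val = 0) then 1
    else if i = k ∧ 2 ≤ i.val then 1 else 0

/-- The element `X(R)` of the abelian nilpotent subalgebra `𝔫 ⊂ so(1,n)`:
`X(R) = [[0, b],[c, 0]]` with `b = [R; 0]`, `c = -bᵀJ`. -/
noncomputable def XmatN (n : ℕ) (R : Fin (n-1) → ℝ) : Matrix (Fin (n+1)) (Fin (n+1)) ℝ :=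
  Matrix.of fun i k =>
    (if h : i.val = 0 ∧ 2 ≤ k.val then
        R ⟨k.val - 2, by have := k.isLt; omega⟩ else 0) +
    (if h : 2 ≤ i.val ∧ k.val = 1 then
        -R ⟨i.val - 2, by have := i.isLt; omega⟩ else 0)

/-- The inclusion of the last `n-1` indices into `Fin (n+1)`. -/
def idxN (n : ℕ) (j : Fin (n-1)) : Fin (n+1) := ⟨j.val + 2, by have := j.isLt; omega⟩

namespace Stmt10Aux

variable {k : ℕ}

def z (k : ℕ) : Fin (k+3) := ⟨0, by omega⟩
def o (k : ℕ) : Fin (k+3) := ⟨1, by omega⟩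
def ix (k : ℕ) (m : Fin (k+1)) : Fin (k+3) := ⟨m.val + 2, by omega⟩
def sw (k : ℕ) (i : Fin (k+3)) : Fin (k+3) :=
  if i.val = 0 then o k else if i.val = 1 then z k else i

lemma sw_z : sw k (z k) = o k := by simp [sw, z]
lemma sw_o : sw k (o k) = z k := by simp [sw, o, z]
lemma sw_ix (m : Fin (k+1)) : sw k (ix k m) = ix k m := by simp [sw, ix]
lemma sw_sw (i : Fin (k+3)) : sw k (sw k i) = i := by
  rcases i with ⟨iv, hi⟩
  simp only [sw, z, o]
  split_ifs <;> simp_all [Fin.ext_iff] <;> omega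

lemma S_apply (i j : Fin (k+3)) : SmatN (k+2) i j = if j = sw k i then 1 else 0 := by
  rcases i with ⟨iv, hi⟩; rcases j with ⟨jv, hj⟩
  simp only [SmatN, Matrix.of_apply, sw, z, o]
  split_ifs <;> simp_all [Fin.ext_iff] <;> omega

lemma S_apply' (i j : Fin (k+3)) : SmatN (k+2) i j = if i = sw k j then 1 else 0 := by
  rw [S_apply]
  by_cases h : j = sw k i
  · rw [if_pos h, if_pos (by rw [h, sw_sw])]
  · rw [if_neg h, if_neg (fun hc => h (by rw [hc, sw_sw]))]

lemma sum_split (f : Fin (k+3) → ℝ) :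
    ∑ b, f b = f (z k) + f (o k) + ∑ m : Fin (k+1), f (ix k m) := by
  rw [Fin.sum_univ_succ, Fin.sum_univ_succ, ← add_assoc]
  have h0 : (0 : Fin (k+3)) = z k := Fin.ext (by simp [z])
  have h1 : (0 : Fin (k+2)).succ = o k := Fin.ext (by simp [o])
  rw [h0, h1]
  congr 1

lemma mul_S_apply (M : Matrix (Fin (k+3)) (Fin (k+3)) ℝ) (p b : Fin (k+3)) :
    (M * SmatN (k+2)) p b = M p (sw k b) := by
  rw [Matrix.mul_apply]
  simp [S_apply', mul_ite, Finset.sum_ite_eq']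

lemma S_mul_apply (M : Matrix (Fin (k+3)) (Fin (k+3)) ℝ) (q x : Fin (k+3)) :
    (SmatN (k+2) * M) q x = M (sw k q) x := by
  rw [Matrix.mul_apply]
  simp [S_apply, ite_mul, Finset.sum_ite_eq']

lemma S_mul_S : SmatN (k+2) * SmatN (k+2) = 1 := by
  ext i j
  rw [mul_S_apply, S_apply, Matrix.one_apply]
  by_cases h : i = j
  · simp [h]
  · rw [if_neg (fun hc => h (by have := congrArg (sw k) hc; rwa [sw_sw, sw_sw, eq_comm] at this)), if_neg h]

variable (R : Fin (k+1) → ℝ)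

lemma X_z_z : XmatN (k+2) R (z k) (z k) = 0 := by simp [XmatN, z]
lemma X_z_o : XmatN (k+2) R (z k) (o k) = 0 := by simp [XmatN, z, o]
lemma X_z_ix (m : Fin (k+1)) : XmatN (k+2) R (z k) (ix k m) = R m := by
  simp [XmatN, z, ix]
lemma X_o (q : Fin (k+3)) : XmatN (k+2) R (o k) q = 0 := by simp [XmatN, o]
lemma X_ix_z (l : Fin (k+1)) : XmatN (k+2) R (ix k l) (z k) = 0 := by simp [XmatN, ix, z]
lemma X_ix_o (l : Fin (k+1)) : XmatN (k+2) R (ix k l) (o k) = -R l := by simp [XmatN, ix, o]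
lemma X_ix_ix (l m : Fin (k+1)) : XmatN (k+2) R (ix k l) (ix k m) = 0 := by simp [XmatN, ix]

lemma S_diag (r : Fin (k+3)) (hr : r.val ≤ 1) : SmatN (k+2) r r = 0 := by
  simp only [SmatN, Matrix.of_apply]
  rw [if_neg (by omega), if_neg (by omega)]

lemma S_lt_ix (r : Fin (k+3)) (hr : r.val ≤ 1) (j : Fin (k+1)) :
    SmatN (k+2) r (ix k j) = 0 := by
  simp only [SmatN, Matrix.of_apply, ix]
  rw [if_neg (by omega), if_neg (by rintro ⟨h1, h2⟩; omega)]

lemma S_ix_ix (j m : Fin (k+1)) :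
    SmatN (k+2) (ix k j) (ix k m) = if j = m then 1 else 0 := by
  simp only [SmatN, Matrix.of_apply, ix]
  rw [if_neg (by omega)]
  by_cases h : j = m
  · subst h; rw [if_pos ⟨rfl, by omega⟩, if_pos rfl]
  · rw [if_neg (fun hc => h (by simpa [Fin.ext_iff] using hc.1)), if_neg h]

end Stmt10Aux

open Stmt10Aux

/-- For every `g ∈ SO(1,n)`, at least one of the linear maps
`R_g, S_g : 𝔫 → ℝ^{n-1}` (last `n−1` entries of the first, resp. second, row of
`g X(R) g⁻¹`) is invertible. -/
theorem stmt10 (n : ℕ) (hn : 2 ≤ n) (g : GL (Fin (n+1)) ℝ)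
    (hg1 : (↑g : Matrix (Fin (n+1)) (Fin (n+1)) ℝ) * SmatN n *
      (↑g : Matrix (Fin (n+1)) (Fin (n+1)) ℝ)ᵀ = SmatN n)
    (hg2 : (↑g : Matrix (Fin (n+1)) (Fin (n+1)) ℝ).det = 1) :
    Function.Bijective (fun R : Fin (n-1) → ℝ => fun j : Fin (n-1) =>
      ((↑g : Matrix (Fin (n+1)) (Fin (n+1)) ℝ) * XmatN n R *
        (↑g⁻¹ : Matrix (Fin (n+1)) (Fin (n+1)) ℝ)) ⟨0, by omega⟩ (idxN n j)) ∨
    Function.Bijective (fun R : Fin (n-1) → ℝ => fun j : Fin (n-1) =>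
      ((↑g : Matrix (Fin (n+1)) (Fin (n+1)) ℝ) * XmatN n R *
        (↑g⁻¹ : Matrix (Fin (n+1)) (Fin (n+1)) ℝ)) ⟨1, by omega⟩ (idxN n j)) := by
  obtain ⟨k, rfl⟩ : ∃ k, n = k + 2 := ⟨n - 2, by omega⟩

  set G : Matrix (Fin (k+3)) (Fin (k+3)) ℝ := (↑g : Matrix (Fin (k+3)) (Fin (k+3)) ℝ) with hGdef
  -- inverse of g
  have h1 : G * (SmatN (k+2) * Gᵀ * SmatN (k+2)) = 1 := by
    calc G * (SmatN (k+2) * Gᵀ * SmatN (k+2))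
        = (G * SmatN (k+2) * Gᵀ) * SmatN (k+2) := by simp only [Matrix.mul_assoc]
      _ = SmatN (k+2) * SmatN (k+2) := by rw [hg1]
      _ = 1 := S_mul_S
  have hGinv : (↑g⁻¹ : Matrix (Fin (k+3)) (Fin (k+3)) ℝ)
      = SmatN (k+2) * Gᵀ * SmatN (k+2) := by
    rw [Matrix.coe_units_inv]
    exact Matrix.inv_eq_right_inv h1
  have hGinvE : ∀ q p, (↑g⁻¹ : Matrix (Fin (k+3)) (Fin (k+3)) ℝ) q p
      = G (sw k p) (sw k q) := by
    intro q p
    rw [hGinv, mul_S_apply, S_mul_apply, Matrix.transpose_apply]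
  -- row orthogonality relations
  have hrow : ∀ p q : Fin (k+3),
      G p (o k) * G q (z k) + G p (z k) * G q (o k)
        + ∑ m, G p (ix k m) * G q (ix k m) = SmatN (k+2) p q := by
    intro p q
    have : (G * SmatN (k+2) * Gᵀ) p q
        = ∑ b, G p (sw k b) * G q b := by
      rw [Matrix.mul_apply]
      simp only [mul_S_apply, Matrix.transpose_apply]
    rw [hg1] at this
    rw [this, sum_split (fun b => G p (sw k b) * G q b)]
    simp [sw_z, sw_o, sw_ix]
  -- column orthogonality at (0,0)
  have h2 : (SmatN (k+2) * Gᵀ * SmatN (k+2)) * G = 1 := mul_eq_one_comm.mp h1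
  have h3 : Gᵀ * SmatN (k+2) * G = SmatN (k+2) := by
    have h4 : SmatN (k+2) * ((SmatN (k+2) * Gᵀ * SmatN (k+2)) * G)
        = SmatN (k+2) * 1 := by rw [h2]
    simp only [← Matrix.mul_assoc] at h4
    rwa [S_mul_S, Matrix.one_mul, Matrix.mul_one] at h4
  have hcol00 : G (o k) (z k) * G (z k) (z k) + G (z k) (z k) * G (o k) (z k)
      + ∑ m, G (ix k m) (z k) * G (ix k m) (z k) = 0 := by
    have e : (Gᵀ * SmatN (k+2) * G) (z k) (z k)
        = ∑ b, G (sw k b) (z k) * G b (z k) := by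
      rw [Matrix.mul_apply]
      simp only [mul_S_apply, Matrix.transpose_apply]
    rw [h3, S_diag _ (by simp [z])] at e
    have e2 := e.symm
    rw [sum_split (fun b => G (sw k b) (z k) * G b (z k))] at e2
    simpa [sw_z, sw_o, sw_ix] using e2
  -- entry formula for the conjugated matrix
  have hentry : ∀ (r : Fin (k+3)) (R : Fin (k+1) → ℝ) (j : Fin (k+1)),
      (G * XmatN (k+2) R * (↑g⁻¹ : Matrix (Fin (k+3)) (Fin (k+3)) ℝ)) r (idxN (k+2) j)
      = ∑ m, (G r (z k) * G (ix k j) (ix k m) - G (ix k j) (z k) * G r (ix k m)) * R m := by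
    intro r R j
    have hidx : idxN (k+2) j = ix k j := rfl
    rw [hidx, Matrix.mul_apply,
      sum_split (fun q => (G * XmatN (k+2) R) r q
        * (↑g⁻¹ : Matrix (Fin (k+3)) (Fin (k+3)) ℝ) q (ix k j))]
    have hz : (G * XmatN (k+2) R) r (z k) = 0 := by
      rw [Matrix.mul_apply, sum_split (fun p => G r p * XmatN (k+2) R p (z k))]
      simp [X_z_z, X_o, X_ix_z]
    have ho : (G * XmatN (k+2) R) r (o k) = -∑ l, G r (ix k l) * R l := by
      rw [Matrix.mul_apply, sum_split (fun p => G r p * XmatN (k+2) R p (o k))]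
      simp [X_z_o, X_o, X_ix_o, mul_neg, Finset.sum_neg_distrib]
    have hix : ∀ m, (G * XmatN (k+2) R) r (ix k m) = G r (z k) * R m := by
      intro m
      rw [Matrix.mul_apply, sum_split (fun p => G r p * XmatN (k+2) R p (ix k m))]
      simp [X_z_ix, X_o, X_ix_ix]
    have g1 : (↑g⁻¹ : Matrix (Fin (k+3)) (Fin (k+3)) ℝ) (o k) (ix k j)
        = G (ix k j) (z k) := by rw [hGinvE, sw_ix, sw_o]
    have g2 : ∀ m, (↑g⁻¹ : Matrix (Fin (k+3)) (Fin (k+3)) ℝ) (ix k m) (ix k j)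
        = G (ix k j) (ix k m) := fun m => by rw [hGinvE, sw_ix, sw_ix]
    simp only [hix, g2]
    rw [hz, ho, g1, zero_mul, zero_add, neg_mul, Finset.sum_mul, neg_add_eq_sub,
      ← Finset.sum_sub_distrib]
    exact Finset.sum_congr rfl fun m _ => by ring
  -- the key bijectivity criterion
  have key : ∀ r : Fin (k+3), r.val ≤ 1 → G r (z k) ≠ 0 →
      Function.Bijective (fun R : Fin (k+1) → ℝ => fun j : Fin (k+1) =>
        (G * XmatN (k+2) R * (↑g⁻¹ : Matrix (Fin (k+3)) (Fin (k+3)) ℝ)) r (idxN (k+2) j)) := by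
    intro r hr hα
    set C : Matrix (Fin (k+1)) (Fin (k+1)) ℝ :=
      Matrix.of (fun j m => G r (z k) * G (ix k j) (ix k m)
        - G (ix k j) (z k) * G r (ix k m)) with hC
    have hfun : (fun R : Fin (k+1) → ℝ => fun j : Fin (k+1) =>
        (G * XmatN (k+2) R * (↑g⁻¹ : Matrix (Fin (k+3)) (Fin (k+3)) ℝ)) r (idxN (k+2) j))
        = fun R => C.mulVec R := by
      funext R j
      rw [hentry]
      simp [Matrix.mulVec, dotProduct, hC]
    rw [hfun]
    have P1 : G r (o k) * G r (z k) + G r (z k) * G r (o k)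
        + ∑ m, G r (ix k m) * G r (ix k m) = 0 := by
      have := hrow r r; rwa [S_diag r hr] at this
    have P2 : ∀ j, G r (o k) * G (ix k j) (z k) + G r (z k) * G (ix k j) (o k)
        + ∑ m, G r (ix k m) * G (ix k j) (ix k m) = 0 := by
      intro j; have := hrow r (ix k j); rwa [S_lt_ix r hr] at this
    have P3 : ∀ j j', G (ix k j) (o k) * G (ix k j') (z k)
        + G (ix k j) (z k) * G (ix k j') (o k)
        + ∑ m, G (ix k j) (ix k m) * G (ix k j') (ix k m) = if j = j' then 1 else 0 := by
      intro j j'; have := hrow (ix k j) (ix k j'); rwa [S_ix_ix] at this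
    have hCC : C * Cᵀ = (G r (z k))^2 • (1 : Matrix (Fin (k+1)) (Fin (k+1)) ℝ) := by
      ext j j'
      rw [Matrix.mul_apply]
      have expand : ∑ m, C j m * Cᵀ m j'
          = (G r (z k))^2 * (∑ m, G (ix k j) (ix k m) * G (ix k j') (ix k m))
            - G r (z k) * G (ix k j') (z k) * (∑ m, G r (ix k m) * G (ix k j) (ix k m))
            - G r (z k) * G (ix k j) (z k) * (∑ m, G r (ix k m) * G (ix k j') (ix k m))
            + G (ix k j) (z k) * G (ix k j') (z k) * (∑ m, G r (ix k m) * G r (ix k m)) := by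
        simp only [Finset.mul_sum]
        rw [← Finset.sum_sub_distrib, ← Finset.sum_sub_distrib, ← Finset.sum_add_distrib]
        exact Finset.sum_congr rfl fun m _ => by
          simp only [hC, Matrix.transpose_apply, Matrix.of_apply]; ring
      rw [expand, Matrix.smul_apply, Matrix.one_apply, smul_eq_mul]
      have e3 := P3 j j'
      have e2 := P2 j
      have e2' := P2 j'
      linear_combination (G r (z k))^2 * e3 - (G r (z k) * G (ix k j') (z k)) * e2
        - (G r (z k) * G (ix k j) (z k)) * e2'
        + (G (ix k j) (z k) * G (ix k j') (z k)) * P1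
    have hdet : C.det ≠ 0 := by
      have hd : C.det * C.det = ((G r (z k))^2)^(k+1) := by
        have := congrArg Matrix.det hCC
        rwa [Matrix.det_mul, Matrix.det_transpose, Matrix.det_smul, Matrix.det_one,
          mul_one, Fintype.card_fin] at this
      intro h0
      rw [h0, mul_zero] at hd
      exact pow_ne_zero _ (pow_ne_zero _ hα) hd.symm
    have hu : IsUnit C.det := isUnit_iff_ne_zero.mpr hdet
    refine Function.bijective_iff_has_inverse.mpr ⟨fun y => C⁻¹.mulVec y, ?_, ?_⟩
    · intro x
      show C⁻¹.mulVec (C.mulVec x) = x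
      rw [Matrix.mulVec_mulVec, Matrix.nonsing_inv_mul _ hu, Matrix.one_mulVec]
    · intro y
      show C.mulVec (C⁻¹.mulVec y) = y
      rw [Matrix.mulVec_mulVec, Matrix.mul_nonsing_inv _ hu, Matrix.one_mulVec]
  -- conclude
  by_cases hα : G (z k) (z k) = 0
  · have hγ : G (o k) (z k) ≠ 0 := by
      intro hγ
      simp only [hα, hγ, zero_mul, mul_zero, zero_add] at hcol00
      have hv : ∀ m, G (ix k m) (z k) = 0 := by
        intro m
        have hnn : ∀ i ∈ Finset.univ, (0:ℝ) ≤ G (ix k i) (z k) * G (ix k i) (z k) :=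
          fun i _ => mul_self_nonneg _
        exact mul_self_eq_zero.mp
          ((Finset.sum_eq_zero_iff_of_nonneg hnn).mp hcol00 m (Finset.mem_univ m))
      have hcolz : ∀ i, G i (z k) = 0 := by
        intro i
        rcases i with ⟨iv, hi⟩
        match iv, hi with
        | 0, hi => exact hα
        | 1, hi => exact hγ
        | (v+2), hi => exact hv ⟨v, by omega⟩
      have hdet0 : G.det = 0 := Matrix.det_eq_zero_of_column_eq_zero (z k) hcolz
      rw [hg2] at hdet0; norm_num at hdet0
    exact Or.inr (key (o k) (by simp [o]) hγ)
  · exact Or.inl (key (z k) (by simp [z]) hα)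
end
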